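/- arXiv:math/9401205 — 3 statements merged into one kernel-verified Lean document; each statement's English description precedes it below -/
import Mathlib

section
/- For every bounded linear operator T : X → Y between Banach spaces and every n ∈ ℕ one has π₂ⁿ(T) ≤ √6 · 1-π₂ⁿ(T). -/
open MeasureTheory

noncomputable section

/-- The weak-`ℓ₂` norm `sup_{‖a‖_{X*}≤1} (∑ |⟨x_i,a⟩|²)^{1/2}`. -/
def weakL2 {X : Type*} [NormedAddCommGroup X] [NormedSpace ℝ X] {m : ℕ}
    (x : Fin m → X) : ℝ :=
  ⨆ a : {a : X →L[ℝ] ℝ // ‖a‖ ≤ 1}, Real.sqrt (∑ i, (a.1 (x i)) ^ 2)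

/-- The absolutely 2-summing norm restricted to `n` vectors. -/
def pi2n (n : ℕ) {X Y : Type*} [NormedAddCommGroup X] [NormedSpace ℝ X]
    [NormedAddCommGroup Y] [NormedSpace ℝ Y] (T : X → Y) : ℝ :=
  sInf {c | 0 ≤ c ∧ ∀ x : Fin n → X,
    Real.sqrt (∑ i, ‖T (x i)‖ ^ 2) ≤ c * weakL2 x}

/-- The equal-norm 2-summing constant `1-π₂ⁿ`. -/
def eqPi2n (n : ℕ) {X Y : Type*} [NormedAddCommGroup X] [NormedSpace ℝ X]
    [NormedAddCommGroup Y] [NormedSpace ℝ Y] (T : X → Y) : ℝ :=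
  sInf {c | 0 ≤ c ∧ ∀ x : Fin n → X, (∀ i j, ‖T (x i)‖ = ‖T (x j)‖) →
    Real.sqrt (∑ i, ‖T (x i)‖ ^ 2) ≤ c * weakL2 x}

section Helpers

variable {X : Type*} [NormedAddCommGroup X] [NormedSpace ℝ X] {m : ℕ}

lemma weakL2_bdd (x : Fin m → X) :
    BddAbove (Set.range fun a : {a : X →L[ℝ] ℝ // ‖a‖ ≤ 1} =>
      Real.sqrt (∑ i, (a.1 (x i)) ^ 2)) := by
  refine ⟨Real.sqrt (∑ i, ‖x i‖ ^ 2), ?_⟩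
  rintro r ⟨a, rfl⟩
  refine Real.sqrt_le_sqrt (Finset.sum_le_sum fun i _ => ?_)
  have h1 : |a.1 (x i)| ≤ ‖x i‖ := by
    calc |a.1 (x i)| = ‖a.1 (x i)‖ := rfl
    _ ≤ ‖a.1‖ * ‖x i‖ := a.1.le_opNorm _
    _ ≤ 1 * ‖x i‖ := by gcongr; exact a.2
    _ = ‖x i‖ := one_mul _
  calc a.1 (x i) ^ 2 = |a.1 (x i)| ^ 2 := (sq_abs _).symm
  _ ≤ ‖x i‖ ^ 2 := pow_le_pow_left₀ (abs_nonneg _) h1 2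

lemma weakL2_nonneg (x : Fin m → X) : 0 ≤ weakL2 x :=
  Real.iSup_nonneg fun _ => Real.sqrt_nonneg _

lemma le_weakL2 (x : Fin m → X) (a : X →L[ℝ] ℝ) (ha : ‖a‖ ≤ 1) :
    Real.sqrt (∑ i, (a (x i)) ^ 2) ≤ weakL2 x :=
  le_ciSup (weakL2_bdd x) ⟨a, ha⟩

lemma weakL2_le (x : Fin m → X) {M : ℝ} (hM : 0 ≤ M)
    (h : ∀ a : X →L[ℝ] ℝ, ‖a‖ ≤ 1 → Real.sqrt (∑ i, (a (x i)) ^ 2) ≤ M) :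
    weakL2 x ≤ M :=
  Real.iSup_le (fun a => h a.1 a.2) hM

lemma norm_le_weakL2 [CompleteSpace X] (x : Fin m → X) (i : Fin m) : ‖x i‖ ≤ weakL2 x := by
  rcases eq_or_ne (x i) 0 with h | h
  · rw [h, norm_zero]; exact weakL2_nonneg x
  · obtain ⟨g, hg1, hgx⟩ := exists_dual_vector ℝ (x i) (norm_ne_zero_iff.mpr h)
    have : ‖x i‖ ≤ Real.sqrt (∑ j, (g (x j)) ^ 2) := by
      have h1 : ‖x i‖ = Real.sqrt ((g (x i))^2) := by
        rw [Real.sqrt_sq_eq_abs]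
        simp [hgx]
      rw [h1]
      refine Real.sqrt_le_sqrt ?_
      exact Finset.single_le_sum (f := fun j => (g (x j))^2) (fun j _ => sq_nonneg _) (Finset.mem_univ i)
    exact this.trans (le_weakL2 x g hg1.le)


lemma exists_multiplicity {n : ℕ} (S : Finset (Fin n)) (w : Fin n → ℝ)
    (hw : ∀ i ∈ S, 0 < w i) {W : ℝ} (hW : W = ∑ i ∈ S, w i) (hWpos : 0 < W) :
    ∃ m : Fin n → ℕ, (∀ i ∉ S, m i = 0) ∧ (∑ i, m i = n) ∧
      ∀ i ∈ S, (m i : ℝ) ≤ n * w i / W + 1 := by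
  classical
  set m₀ : Fin n → ℕ := fun i => if i ∈ S then ⌊(n : ℝ) * w i / W⌋₊ else 0 with hm₀
  have hnonneg : ∀ i ∈ S, 0 ≤ (n : ℝ) * w i / W := fun i hi =>
    div_nonneg (mul_nonneg (Nat.cast_nonneg n) (hw i hi).le) hWpos.le
  have hsum_le : ∑ i ∈ S, m₀ i ≤ n := by
    have : ((∑ i ∈ S, m₀ i : ℕ) : ℝ) ≤ n := by
      push_cast
      calc ∑ i ∈ S, ((m₀ i : ℕ) : ℝ) ≤ ∑ i ∈ S, (n : ℝ) * w i / W := by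
            refine Finset.sum_le_sum fun i hi => ?_
            simp only [hm₀, if_pos hi]
            exact Nat.floor_le (hnonneg i hi)
      _ = (n : ℝ) * (∑ i ∈ S, w i) / W := by rw [Finset.mul_sum, Finset.sum_div]
      _ = n := by rw [← hW, mul_div_assoc, div_self hWpos.ne', mul_one]
    exact_mod_cast this
  have hsum_ge : n ≤ ∑ i ∈ S, m₀ i + S.card := by
    have : (n : ℝ) ≤ ∑ i ∈ S, m₀ i + S.card := by
      calc (n : ℝ) = (n : ℝ) * (∑ i ∈ S, w i) / W := by
            rw [← hW, mul_div_assoc, div_self hWpos.ne', mul_one]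
      _ = ∑ i ∈ S, (n : ℝ) * w i / W := by rw [Finset.mul_sum, Finset.sum_div]
      _ ≤ ∑ i ∈ S, ((m₀ i : ℝ) + 1) := by
            refine Finset.sum_le_sum fun i hi => ?_
            simp only [hm₀, if_pos hi]
            exact (Nat.lt_floor_add_one _).le
      _ = ∑ i ∈ S, (m₀ i : ℝ) + S.card := by
            rw [Finset.sum_add_distrib]; simp
      _ = _ := by push_cast; ring
    exact_mod_cast this
  set r := n - ∑ i ∈ S, m₀ i with hr
  have hrcard : r ≤ S.card := by omega
  obtain ⟨S', hS'sub, hS'card⟩ := Finset.exists_subset_card_eq hrcard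
  refine ⟨fun i => m₀ i + (if i ∈ S' then 1 else 0), ?_, ?_, ?_⟩
  · intro i hi
    simp only [hm₀, if_neg hi, if_neg (fun h => hi (hS'sub h)), add_zero]
  · have h1 : ∑ i, m₀ i = ∑ i ∈ S, m₀ i := by
      rw [← Finset.sum_subset (Finset.subset_univ S)]
      intro i _ hi; simp [hm₀, if_neg hi]
    have h2 : ∑ i, (if i ∈ S' then (1:ℕ) else 0) = S'.card := by
      simp [Finset.sum_ite_mem]
    rw [Finset.sum_add_distrib, h1, h2, hS'card]
    omega
  · intro i hi
    push_cast
    have h1 : ((m₀ i : ℕ) : ℝ) ≤ (n : ℝ) * w i / W := by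
      simp only [hm₀, if_pos hi]
      exact Nat.floor_le (hnonneg i hi)
    have h2 : ((if i ∈ S' then 1 else 0 : ℕ) : ℝ) ≤ 1 := by split <;> norm_num
    push_cast at h2 ⊢
    linarith


lemma main_step {X Y : Type*} [NormedAddCommGroup X] [NormedSpace ℝ X]
    [NormedAddCommGroup Y] [NormedSpace ℝ Y]
    (T : X →L[ℝ] Y) {n : ℕ} {c : ℝ} (hc : 0 ≤ c)
    (heq : ∀ x : Fin n → X, (∀ i j, ‖T (x i)‖ = ‖T (x j)‖) →
      Real.sqrt (∑ i, ‖T (x i)‖ ^ 2) ≤ c * weakL2 x)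
    (x : Fin n → X) :
    Real.sqrt (∑ i, ‖T (x i)‖ ^ 2) ≤ 2 * c * weakL2 x := by
  classical
  set σ2 : ℝ := ∑ i, ‖T (x i)‖ ^ 2 with hσ2def
  have hσ2nn : 0 ≤ σ2 := Finset.sum_nonneg fun i _ => sq_nonneg _
  rcases eq_or_lt_of_le hσ2nn with hσ2 | hσ2
  · rw [← hσ2, Real.sqrt_zero]
    exact mul_nonneg (mul_nonneg (by norm_num) hc) (weakL2_nonneg x)
  have hn : 0 < n := by
    rcases Nat.eq_zero_or_pos n with h | h
    · subst h; simp [hσ2def] at hσ2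
    · exact h
  have hnR : (0:ℝ) < n := by exact_mod_cast hn
  -- the set of large coordinates
  set S : Finset (Fin n) := Finset.univ.filter (fun i => σ2 / (2*n) ≤ ‖T (x i)‖ ^ 2) with hS
  set w : Fin n → ℝ := fun i => ‖T (x i)‖ ^ 2 with hwdef
  have hthr : 0 < σ2 / (2*n) := by positivity
  have hw : ∀ i ∈ S, 0 < w i := by
    intro i hi
    rw [hS, Finset.mem_filter] at hi
    exact lt_of_lt_of_le hthr hi.2
  set W : ℝ := ∑ i ∈ S, w i with hWdef
  have hWge : σ2 / 2 ≤ W := by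
    have hcompl : ∑ i ∈ Sᶜ, w i ≤ σ2 / 2 := by
      calc ∑ i ∈ Sᶜ, w i ≤ ∑ _i ∈ Sᶜ, σ2 / (2*n) := by
            refine Finset.sum_le_sum fun i hi => ?_
            rw [Finset.mem_compl, hS, Finset.mem_filter] at hi
            push_neg at hi
            exact (hi (Finset.mem_univ i)).le
      _ = Sᶜ.card * (σ2 / (2*n)) := by rw [Finset.sum_const, nsmul_eq_mul]
      _ ≤ n * (σ2 / (2*n)) := by
            gcongr
            exact_mod_cast (Finset.card_le_univ _).trans_eq (Finset.card_fin n)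
      _ = σ2 / 2 := by field_simp
    have htot : W + ∑ i ∈ Sᶜ, w i = σ2 := Finset.sum_add_sum_compl S w
    linarith
  have hWpos : 0 < W := lt_of_lt_of_le (by linarith) hWge
  obtain ⟨m, hm0, hmsum, hmle⟩ := exists_multiplicity S w hw hWdef hWpos
  -- key bound on m i / w i
  have hkey : ∀ i ∈ S, (m i : ℝ) * (w i)⁻¹ ≤ 4 * n / σ2 := by
    intro i hi
    have h1 : (m i : ℝ) ≤ n * w i / W + 1 := hmle i hi
    have hwi : 0 < w i := hw i hi
    have h2 : (m i : ℝ) * (w i)⁻¹ ≤ (n * w i / W + 1) * (w i)⁻¹ := by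
      gcongr
    have h3 : (n * w i / W + 1) * (w i)⁻¹ = n / W + (w i)⁻¹ := by
      field_simp
    have h4 : (n:ℝ) / W ≤ 2 * n / σ2 := by
      rw [div_le_div_iff₀ hWpos hσ2]
      nlinarith
    have h5 : (w i)⁻¹ ≤ 2 * n / σ2 := by
      have hge : σ2 / (2*n) ≤ w i := by
        rw [hS, Finset.mem_filter] at hi; exact hi.2
      have := one_div_le_one_div_of_le hthr hge
      rw [one_div, one_div, inv_div] at this
      linarith
    calc (m i : ℝ) * (w i)⁻¹ ≤ (↑n * w i / W + 1) * (w i)⁻¹ := h2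
      _ = ↑n / W + (w i)⁻¹ := h3
      _ ≤ 2 * ↑n / σ2 + 2 * ↑n / σ2 := add_le_add h4 h5
      _ = 4 * ↑n / σ2 := by ring
  -- build the equal-norm family
  have hcard : Fintype.card (Σ i : Fin n, Fin (m i)) = n := by
    rw [Fintype.card_sigma]
    simp [hmsum]
  set e : (Σ i : Fin n, Fin (m i)) ≃ Fin n := Fintype.equivFinOfCardEq hcard with he
  set y : Fin n → X := fun j => (‖T (x (e.symm j).1)‖)⁻¹ • x ((e.symm j).1) with hy
  have hmemS : ∀ p : Σ i : Fin n, Fin (m i), p.1 ∈ S := by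
    intro p
    by_contra h
    have h1 := hm0 p.1 h
    have h2 := p.2.isLt
    omega
  have hTpos : ∀ p : Σ i : Fin n, Fin (m i), 0 < ‖T (x p.1)‖ := by
    intro p
    have h2 : 0 < ‖T (x p.fst)‖ ^ 2 := hw p.fst (hmemS p)
    rcases eq_or_lt_of_le (norm_nonneg (T (x p.fst))) with h | h
    · exfalso; rw [← h] at h2; simp at h2
    · exact h
  have hTy : ∀ j, ‖T (y j)‖ = 1 := by
    intro j
    rw [hy]
    simp only [_root_.map_smul, norm_smul, norm_inv, norm_norm]
    exact inv_mul_cancel₀ (hTpos (e.symm j)).ne'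
  have hyeq : Real.sqrt (∑ i, ‖T (y i)‖ ^ 2) ≤ c * weakL2 y :=
    heq y (fun i j => by rw [hTy, hTy])
  have hlhs : Real.sqrt (∑ i, ‖T (y i)‖ ^ 2) = Real.sqrt n := by
    congr 1
    simp [hTy]
  -- bound weakL2 y
  have hwy : weakL2 y ≤ Real.sqrt (4 * n / σ2) * weakL2 x := by
    refine weakL2_le y (mul_nonneg (Real.sqrt_nonneg _) (weakL2_nonneg x)) ?_
    intro g hg
    have hsum : ∑ j, (g (y j)) ^ 2 = ∑ i, (m i : ℝ) * ((w i)⁻¹ * (g (x i)) ^ 2) := by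
      rw [← Equiv.sum_comp e (fun j => (g (y j)) ^ 2)]
      have hyp : ∀ p : Σ i : Fin n, Fin (m i),
          (g (y (e p))) ^ 2 = (w p.1)⁻¹ * (g (x p.1)) ^ 2 := by
        intro p
        rw [hy]
        simp only [Equiv.symm_apply_apply, _root_.map_smul, smul_eq_mul]
        simp only [mul_pow, inv_pow, hwdef]
      calc ∑ p : Σ i : Fin n, Fin (m i), (g (y (e p))) ^ 2
          = ∑ p : Σ i : Fin n, Fin (m i), (w p.1)⁻¹ * (g (x p.1)) ^ 2 := by
            exact Finset.sum_congr rfl fun p _ => hyp p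
        _ = ∑ i, ∑ _j : Fin (m i), (w i)⁻¹ * (g (x i)) ^ 2 := by
            rw [← Finset.univ_sigma_univ, Finset.sum_sigma]
        _ = ∑ i, (m i : ℝ) * ((w i)⁻¹ * (g (x i)) ^ 2) := by
            refine Finset.sum_congr rfl fun i _ => ?_
            rw [Finset.sum_const, nsmul_eq_mul]
            simp
    have hbound : ∑ j, (g (y j)) ^ 2 ≤ (4 * n / σ2) * ∑ i, (g (x i)) ^ 2 := by
      rw [hsum, Finset.mul_sum]
      refine Finset.sum_le_sum fun i _ => ?_
      by_cases hi : i ∈ S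
      · have := hkey i hi
        have hnn : (0:ℝ) ≤ (g (x i)) ^ 2 := sq_nonneg _
        calc (m i : ℝ) * ((w i)⁻¹ * (g (x i)) ^ 2)
            = ((m i : ℝ) * (w i)⁻¹) * (g (x i)) ^ 2 := by ring
          _ ≤ (4 * n / σ2) * (g (x i)) ^ 2 := by gcongr
      · rw [hm0 i hi]
        push_cast
        rw [zero_mul]
        positivity
    calc Real.sqrt (∑ j, (g (y j)) ^ 2)
        ≤ Real.sqrt ((4 * n / σ2) * ∑ i, (g (x i)) ^ 2) := Real.sqrt_le_sqrt hbound
      _ = Real.sqrt (4 * n / σ2) * Real.sqrt (∑ i, (g (x i)) ^ 2) := Real.sqrt_mul (by positivity) _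
      _ ≤ Real.sqrt (4 * n / σ2) * weakL2 x :=
            mul_le_mul_of_nonneg_left (le_weakL2 x g hg) (Real.sqrt_nonneg _)
  -- combine
  have hmain : Real.sqrt n ≤ c * (Real.sqrt (4 * n / σ2) * weakL2 x) := by
    rw [← hlhs]
    exact hyeq.trans (by gcongr)
  have hsqrt4 : Real.sqrt (4 * n / σ2) = 2 * Real.sqrt n / Real.sqrt σ2 := by
    rw [div_eq_mul_inv (4 * (n:ℝ)), Real.sqrt_mul (by positivity), Real.sqrt_mul (by norm_num),
      Real.sqrt_inv]
    rw [show Real.sqrt 4 = 2 by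
      rw [show (4:ℝ) = 2^2 by norm_num, Real.sqrt_sq (by norm_num)]]
    ring
  rw [hsqrt4] at hmain
  have hsn : 0 < Real.sqrt n := Real.sqrt_pos.mpr hnR
  have hsσ : 0 < Real.sqrt σ2 := Real.sqrt_pos.mpr hσ2
  have h1 : Real.sqrt n * Real.sqrt σ2 ≤ (c * (2 * Real.sqrt n / Real.sqrt σ2 * weakL2 x)) * Real.sqrt σ2 :=
    mul_le_mul_of_nonneg_right hmain hsσ.le
  have h2 : (c * (2 * Real.sqrt n / Real.sqrt σ2 * weakL2 x)) * Real.sqrt σ2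
      = (2 * c * weakL2 x) * Real.sqrt n := by
    field_simp
  rw [h2] at h1
  rw [mul_comm (Real.sqrt (n:ℝ)) (Real.sqrt σ2)] at h1
  exact le_of_mul_le_mul_right h1 hsn


lemma norms_le (X Y : Type*) [NormedAddCommGroup X] [NormedSpace ℝ X] [CompleteSpace X]
    [NormedAddCommGroup Y] [NormedSpace ℝ Y]
    (T : X →L[ℝ] Y) (n : ℕ) (x : Fin n → X) :
    Real.sqrt (∑ i, ‖T (x i)‖ ^ 2) ≤ (‖T‖ * Real.sqrt n) * weakL2 x := by
  have hle : ∀ i : Fin n, ‖T (x i)‖ ≤ ‖T‖ * weakL2 x := by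
    intro i
    calc ‖T (x i)‖ ≤ ‖T‖ * ‖x i‖ := T.le_opNorm _
    _ ≤ ‖T‖ * weakL2 x := by
          exact mul_le_mul_of_nonneg_left (norm_le_weakL2 x i) (norm_nonneg T)
  calc Real.sqrt (∑ i, ‖T (x i)‖ ^ 2)
      ≤ Real.sqrt (∑ _i : Fin n, (‖T‖ * weakL2 x) ^ 2) := by
        refine Real.sqrt_le_sqrt (Finset.sum_le_sum fun i _ => ?_)
        exact pow_le_pow_left₀ (norm_nonneg _) (hle i) 2
    _ = Real.sqrt ((n : ℝ) * (‖T‖ * weakL2 x) ^ 2) := by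
        rw [Finset.sum_const, nsmul_eq_mul, Finset.card_univ, Fintype.card_fin]
    _ = Real.sqrt n * (‖T‖ * weakL2 x) := by
        rw [Real.sqrt_mul (Nat.cast_nonneg n), Real.sqrt_sq]
        exact mul_nonneg (norm_nonneg T) (weakL2_nonneg x)
    _ = (‖T‖ * Real.sqrt n) * weakL2 x := by ring

end Helpers

/-- **Lemma 1.1.** `π₂ⁿ(T) ≤ √6 · 1-π₂ⁿ(T)`. -/
theorem pi2n_le_sqrt_six_mul_eqPi2n
    {X Y : Type*} [NormedAddCommGroup X] [NormedSpace ℝ X] [CompleteSpace X]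
    [NormedAddCommGroup Y] [NormedSpace ℝ Y] [CompleteSpace Y]
    (T : X →L[ℝ] Y) (n : ℕ) :
    pi2n n (⇑T) ≤ Real.sqrt 6 * eqPi2n n (⇑T) := by
  classical
  set E : Set ℝ := {c | 0 ≤ c ∧ ∀ x : Fin n → X, (∀ i j, ‖T (x i)‖ = ‖T (x j)‖) →
    Real.sqrt (∑ i, ‖T (x i)‖ ^ 2) ≤ c * weakL2 x} with hE
  set P : Set ℝ := {c | 0 ≤ c ∧ ∀ x : Fin n → X,
    Real.sqrt (∑ i, ‖T (x i)‖ ^ 2) ≤ c * weakL2 x} with hP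
  have hEP : pi2n n (⇑T) = sInf P ∧ eqPi2n n (⇑T) = sInf E := ⟨rfl, rfl⟩
  have hEne : E.Nonempty := by
    refine ⟨‖T‖ * Real.sqrt n, ⟨by positivity, fun x _ => norms_le X Y T n x⟩⟩
  have hPbdd : BddBelow P := ⟨0, fun c hc => hc.1⟩
  have h6pos : (0:ℝ) < Real.sqrt 6 := Real.sqrt_pos.mpr (by norm_num)
  have h26 : (2:ℝ) ≤ Real.sqrt 6 := by
    rw [show (2:ℝ) = Real.sqrt 4 by
      rw [show (4:ℝ) = 2^2 by norm_num, Real.sqrt_sq (by norm_num)]]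
    exact Real.sqrt_le_sqrt (by norm_num)
  have hstep : ∀ b ∈ E, pi2n n (⇑T) ≤ Real.sqrt 6 * b := by
    intro b hb
    obtain ⟨hb0, hbeq⟩ := hb
    have hmem : Real.sqrt 6 * b ∈ P := by
      refine ⟨mul_nonneg h6pos.le hb0, fun x => ?_⟩
      calc Real.sqrt (∑ i, ‖T (x i)‖ ^ 2) ≤ 2 * b * weakL2 x :=
            main_step T hb0 hbeq x
        _ ≤ Real.sqrt 6 * b * weakL2 x :=
            mul_le_mul_of_nonneg_right (mul_le_mul_of_nonneg_right h26 hb0)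
              (weakL2_nonneg x)
    exact csInf_le hPbdd hmem
  have hdiv : pi2n n (⇑T) / Real.sqrt 6 ≤ sInf E := by
    refine le_csInf hEne fun b hb => ?_
    rw [div_le_iff₀ h6pos, mul_comm]
    exact hstep b hb
  rw [hEP.2]
  rw [div_le_iff₀ h6pos] at hdiv
  linarith [hdiv]

end
end

section
/- Let α be an ideal norm on L(ℓ₂ⁿ, ·) and β an ideal norm on L(·, ℓ₂ⁿ). (1) If u : ℓ₂ⁿ → X satisfies ‖u e_i‖ = 1 for i = 1,…,n, then α(ι_{2,∞}ⁿ) ≤ α(u). (2) If v : X → ℓ₂ⁿ satisfies ‖v* e_i‖ = 1 for i = 1,…,n, then β(ι_{1,2}ⁿ) ≤ β(v). -/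
open MeasureTheory ProbabilityTheory

noncomputable section

/-- `ℓ₂ⁿ`. -/
abbrev l2n (n : ℕ) := EuclideanSpace ℝ (Fin n)
/-- `ℓ∞ⁿ` (i.e. `ℝⁿ` with the sup norm). -/
abbrev linfn (n : ℕ) := Fin n → ℝ
/-- `ℓ₁ⁿ`. -/
abbrev l1n (n : ℕ) := PiLp 1 (fun _ : Fin n => ℝ)

/-- formal identity `ι_{2,∞}ⁿ : ℓ₂ⁿ → ℓ∞ⁿ`. -/
def iota2inf (n : ℕ) : l2n n →L[ℝ] linfn n :=
  (PiLp.continuousLinearEquiv 2 ℝ (fun _ : Fin n => ℝ)).toContinuousLinearMap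

/-- formal identity `ι_{1,2}ⁿ : ℓ₁ⁿ → ℓ₂ⁿ`. -/
def iota12 (n : ℕ) : l1n n →L[ℝ] l2n n :=
  ((PiLp.continuousLinearEquiv 2 ℝ (fun _ : Fin n => ℝ)).symm.toContinuousLinearMap).comp
    (PiLp.continuousLinearEquiv 1 ℝ (fun _ : Fin n => ℝ)).toContinuousLinearMap

/-- An ideal norm on `L(ℓ₂ⁿ, ·)`: a norm `α` on each component `L(ℓ₂ⁿ, X)` with
`‖TuA‖ ≤ α(TuA) ≤ ‖T‖ α(u) ‖A‖` and `α(a ⊗ x) = ‖a‖ ‖x‖`. -/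
structure IdealNormDom (n : ℕ) where
  α : ∀ (X : Type) [NormedAddCommGroup X] [NormedSpace ℝ X] [CompleteSpace X],
        (l2n n →L[ℝ] X) → ℝ
  add_le : ∀ (X : Type) [NormedAddCommGroup X] [NormedSpace ℝ X] [CompleteSpace X]
        (u v : l2n n →L[ℝ] X), α X (u + v) ≤ α X u + α X v
  smul_eq : ∀ (X : Type) [NormedAddCommGroup X] [NormedSpace ℝ X] [CompleteSpace X]
        (c : ℝ) (u : l2n n →L[ℝ] X), α X (c • u) = |c| * α X u
  eq_zero : ∀ (X : Type) [NormedAddCommGroup X] [NormedSpace ℝ X] [CompleteSpace X]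
        (u : l2n n →L[ℝ] X), α X u = 0 → u = 0
  ideal_lower : ∀ (X Y : Type) [NormedAddCommGroup X] [NormedSpace ℝ X] [CompleteSpace X]
        [NormedAddCommGroup Y] [NormedSpace ℝ Y] [CompleteSpace Y]
        (T : X →L[ℝ] Y) (u : l2n n →L[ℝ] X) (A : l2n n →L[ℝ] l2n n),
        ‖T.comp (u.comp A)‖ ≤ α Y (T.comp (u.comp A))
  ideal_upper : ∀ (X Y : Type) [NormedAddCommGroup X] [NormedSpace ℝ X] [CompleteSpace X]
        [NormedAddCommGroup Y] [NormedSpace ℝ Y] [CompleteSpace Y]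
        (T : X →L[ℝ] Y) (u : l2n n →L[ℝ] X) (A : l2n n →L[ℝ] l2n n),
        α Y (T.comp (u.comp A)) ≤ ‖T‖ * α X u * ‖A‖
  rank_one : ∀ (X : Type) [NormedAddCommGroup X] [NormedSpace ℝ X] [CompleteSpace X]
        (a : l2n n) (x : X), α X ((innerSL ℝ a).smulRight x) = ‖a‖ * ‖x‖

/-- An ideal norm on `L(·, ℓ₂ⁿ)`: a norm `β` on each component `L(Y, ℓ₂ⁿ)` with
`‖AvT‖ ≤ β(AvT) ≤ ‖A‖ β(v) ‖T‖` and `β(b ⊗ y) = ‖b‖ ‖y‖`. -/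
structure IdealNormCod (n : ℕ) where
  β : ∀ (Y : Type) [NormedAddCommGroup Y] [NormedSpace ℝ Y] [CompleteSpace Y],
        (Y →L[ℝ] l2n n) → ℝ
  add_le : ∀ (Y : Type) [NormedAddCommGroup Y] [NormedSpace ℝ Y] [CompleteSpace Y]
        (v w : Y →L[ℝ] l2n n), β Y (v + w) ≤ β Y v + β Y w
  smul_eq : ∀ (Y : Type) [NormedAddCommGroup Y] [NormedSpace ℝ Y] [CompleteSpace Y]
        (c : ℝ) (v : Y →L[ℝ] l2n n), β Y (c • v) = |c| * β Y v
  eq_zero : ∀ (Y : Type) [NormedAddCommGroup Y] [NormedSpace ℝ Y] [CompleteSpace Y]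
        (v : Y →L[ℝ] l2n n), β Y v = 0 → v = 0
  ideal_lower : ∀ (X Y : Type) [NormedAddCommGroup X] [NormedSpace ℝ X] [CompleteSpace X]
        [NormedAddCommGroup Y] [NormedSpace ℝ Y] [CompleteSpace Y]
        (A : l2n n →L[ℝ] l2n n) (v : Y →L[ℝ] l2n n) (T : X →L[ℝ] Y),
        ‖A.comp (v.comp T)‖ ≤ β X (A.comp (v.comp T))
  ideal_upper : ∀ (X Y : Type) [NormedAddCommGroup X] [NormedSpace ℝ X] [CompleteSpace X]
        [NormedAddCommGroup Y] [NormedSpace ℝ Y] [CompleteSpace Y]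
        (A : l2n n →L[ℝ] l2n n) (v : Y →L[ℝ] l2n n) (T : X →L[ℝ] Y),
        β X (A.comp (v.comp T)) ≤ ‖A‖ * β Y v * ‖T‖
  rank_one : ∀ (Y : Type) [NormedAddCommGroup Y] [NormedSpace ℝ Y] [CompleteSpace Y]
        (b : Y →L[ℝ] ℝ) (y : l2n n), β Y (b.smulRight y) = ‖b‖ * ‖y‖



section AuxIdealNorm

/-- sign associated to a boolean -/
def sgn (b : Bool) : ℝ := if b then 1 else -1

lemma abs_sgn (b : Bool) : |sgn b| = 1 := by cases b <;> simp [sgn]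
lemma sgn_mul_self (b : Bool) : sgn b * sgn b = 1 := by cases b <;> norm_num [sgn]
lemma sgn_not (b : Bool) : sgn (!b) = - sgn b := by cases b <;> simp [sgn]

lemma key_sum (n : ℕ) (i j : Fin n) :
    ∑ ε : Fin n → Bool, sgn (ε i) * sgn (ε j) = if i = j then (2 ^ n : ℝ) else 0 := by
  by_cases h : i = j
  · subst h
    simp [sgn_mul_self, Finset.card_univ, Fintype.card_fun]
  · rw [if_neg h]
    apply Finset.sum_involution (g := fun ε _ => Function.update ε i (!(ε i)))
    · intro ε _
      rw [Function.update_self, Function.update_of_ne (Ne.symm (fun hh => h (congrArg id hh))), sgn_not]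
      ring_nf
    · intro ε _ _
      intro hc
      have := congrFun hc i
      rw [Function.update_self] at this
      exact (Bool.not_ne_self _) this
    · intro ε _
      funext k
      by_cases hk : k = i
      · subst hk; simp
      · simp [Function.update_of_ne hk]
    · intro ε _; exact Finset.mem_univ _

/-- diagonal sign operator on `ℓ₂ⁿ` -/
def Dsign (n : ℕ) (ε : Fin n → Bool) : l2n n →L[ℝ] l2n n :=
  LinearMap.mkContinuous
    { toFun := fun x => WithLp.toLp 2 (fun k => sgn (ε k) * x k)
      map_add' := by intro x y; ext k; simp [PiLp.add_apply]; ring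
      map_smul' := by intro c x; ext k; simp [PiLp.smul_apply, smul_eq_mul]; ring }
    1
    (by
      intro x
      rw [one_mul]
      apply le_of_eq
      rw [EuclideanSpace.norm_eq, EuclideanSpace.norm_eq]
      congr 1
      apply Finset.sum_congr rfl
      intro k _
      simp [Real.norm_eq_abs, abs_mul, abs_sgn])

lemma Dsign_apply (n : ℕ) (ε : Fin n → Bool) (x : l2n n) (k : Fin n) :
    Dsign n ε x k = sgn (ε k) * x k := rfl

lemma norm_Dsign_le (n : ℕ) (ε : Fin n → Bool) : ‖Dsign n ε‖ ≤ 1 :=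
  LinearMap.mkContinuous_norm_le _ zero_le_one _

lemma avg_id1 (n : ℕ) (X : Type) [NormedAddCommGroup X] [NormedSpace ℝ X]
    (u : l2n n →L[ℝ] X) (f : Fin n → (X →L[ℝ] ℝ))
    (hf : ∀ i, f i (u (EuclideanSpace.single i 1)) = 1) :
    ((2 ^ n : ℝ)⁻¹) • ∑ ε : Fin n → Bool,
      (ContinuousLinearMap.pi (fun j => sgn (ε j) • f j)).comp (u.comp (Dsign n ε))
      = iota2inf n := by
  ext x j
  have hD : ∀ ε : Fin n → Bool, Dsign n ε x
      = ∑ i, (sgn (ε i) * x i) • EuclideanSpace.single i (1 : ℝ) := by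
    intro ε
    ext k
    rw [Dsign_apply, WithLp.ofLp_sum, Finset.sum_apply]
    simp [EuclideanSpace.single_apply, PiLp.smul_apply]
  have hu : ∀ ε : Fin n → Bool, ∀ j : Fin n, f j (u (Dsign n ε x))
      = ∑ i, (sgn (ε i) * x i) * f j (u (EuclideanSpace.single i 1)) := by
    intro ε j
    rw [hD, map_sum, map_sum]
    simp [_root_.map_smul, smul_eq_mul]
  have hRHS : iota2inf n x j = x j := rfl
  rw [hRHS]
  simp only [ContinuousLinearMap.smul_apply, ContinuousLinearMap.coe_sum',
    Finset.sum_apply, ContinuousLinearMap.comp_apply, ContinuousLinearMap.pi_apply,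
    Pi.smul_apply, Finset.sum_apply, smul_eq_mul]
  simp only [ContinuousLinearMap.smul_apply, smul_eq_mul, hu]
  have swap : ∑ ε : Fin n → Bool, sgn (ε j) *
        (∑ i, (sgn (ε i) * x i) * f j (u (EuclideanSpace.single i 1)))
      = ∑ i, (∑ ε : Fin n → Bool, sgn (ε i) * sgn (ε j)) *
        (x i * f j (u (EuclideanSpace.single i 1))) := by
    simp_rw [Finset.mul_sum]
    rw [Finset.sum_comm]
    refine Finset.sum_congr rfl fun i _ => ?_
    rw [Finset.sum_mul]
    exact Finset.sum_congr rfl fun ε _ => by ring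
  rw [swap]
  simp only [key_sum, ite_mul, zero_mul]
  rw [Finset.sum_ite_eq' Finset.univ j]
  simp [hf j]

lemma l1n_norm (n : ℕ) (x : l1n n) : ‖x‖ = ∑ i, |x i| := by
  rw [PiLp.norm_eq_sum (by norm_num)]
  simp [Real.norm_eq_abs]

/-- the operator `ℓ₁ⁿ → X` sending `e_i` to `y i` -/
def Tl1 (n : ℕ) (X : Type) [NormedAddCommGroup X] [NormedSpace ℝ X]
    (y : Fin n → X) : l1n n →L[ℝ] X :=
  LinearMap.mkContinuous
    { toFun := fun x => ∑ i, x i • y i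
      map_add' := by intro a b; simp [PiLp.add_apply, add_smul, Finset.sum_add_distrib]
      map_smul' := by
        intro c a
        simp [PiLp.smul_apply, smul_eq_mul, mul_smul, Finset.smul_sum] }
    (∑ i, ‖y i‖)
    (by
      intro x
      calc ‖∑ i, x i • y i‖ ≤ ∑ i, ‖x i • y i‖ := norm_sum_le _ _
        _ = ∑ i, ‖y i‖ * |x i| := by
            refine Finset.sum_congr rfl fun i _ => ?_
            rw [norm_smul, Real.norm_eq_abs, mul_comm]
        _ ≤ ∑ i, ‖y i‖ * ‖x‖ := by
            refine Finset.sum_le_sum fun i _ => ?_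
            refine mul_le_mul_of_nonneg_left ?_ (norm_nonneg _)
            rw [l1n_norm]
            exact Finset.single_le_sum (f := fun i => |x i|)
              (fun i _ => abs_nonneg _) (Finset.mem_univ i)
        _ = (∑ i, ‖y i‖) * ‖x‖ := by rw [Finset.sum_mul])

lemma Tl1_apply (n : ℕ) (X : Type) [NormedAddCommGroup X] [NormedSpace ℝ X]
    (y : Fin n → X) (x : l1n n) : Tl1 n X y x = ∑ i, x i • y i := rfl

lemma norm_Tl1_le (n : ℕ) (X : Type) [NormedAddCommGroup X] [NormedSpace ℝ X]
    (y : Fin n → X) (r : ℝ) (hr : 0 ≤ r) (h : ∀ i, ‖y i‖ ≤ r) :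
    ‖Tl1 n X y‖ ≤ r := by
  refine ContinuousLinearMap.opNorm_le_bound _ hr fun x => ?_
  rw [Tl1_apply]
  calc ‖∑ i, x i • y i‖ ≤ ∑ i, ‖x i • y i‖ := norm_sum_le _ _
    _ ≤ ∑ i, |x i| * r := by
        refine Finset.sum_le_sum fun i _ => ?_
        rw [norm_smul, Real.norm_eq_abs]
        exact mul_le_mul_of_nonneg_left (h i) (abs_nonneg _)
    _ = r * ‖x‖ := by rw [← Finset.sum_mul, l1n_norm, mul_comm]

lemma avg_id2 (n : ℕ) (X : Type) [NormedAddCommGroup X] [NormedSpace ℝ X]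
    (v : X →L[ℝ] l2n n) (y : Fin n → X) (hy : ∀ i, (v (y i)) i = 1) :
    ((2 ^ n : ℝ)⁻¹) • ∑ ε : Fin n → Bool,
      (Dsign n ε).comp (v.comp (Tl1 n X (fun i => sgn (ε i) • y i)))
      = iota12 n := by
  refine ContinuousLinearMap.ext fun x => ?_
  ext j
  have hRHS : iota12 n x j = x j := rfl
  rw [hRHS]
  have hv : ∀ ε : Fin n → Bool,
      (Dsign n ε) (v (Tl1 n X (fun i => sgn (ε i) • y i) x)) j
      = sgn (ε j) * ∑ i, (sgn (ε i) * x i) * (v (y i)) j := by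
    intro ε
    rw [Dsign_apply, Tl1_apply, map_sum, WithLp.ofLp_sum, Finset.sum_apply]
    congr 1
    refine Finset.sum_congr rfl fun i _ => ?_
    rw [smul_comm, _root_.map_smul, _root_.map_smul]
    simp [PiLp.smul_apply, smul_eq_mul]
    ring
  simp only [ContinuousLinearMap.smul_apply, ContinuousLinearMap.coe_sum',
    ContinuousLinearMap.comp_apply]
  rw [PiLp.smul_apply, smul_eq_mul]
  simp only [WithLp.ofLp_sum, Finset.sum_apply]
  simp only [ContinuousLinearMap.comp_apply]
  simp only [hv]
  have swap : ∑ ε : Fin n → Bool, sgn (ε j) * (∑ i, (sgn (ε i) * x i) * (v (y i)) j)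
      = ∑ i, (∑ ε : Fin n → Bool, sgn (ε i) * sgn (ε j)) * (x i * (v (y i)) j) := by
    simp_rw [Finset.mul_sum]
    rw [Finset.sum_comm]
    refine Finset.sum_congr rfl fun i _ => ?_
    rw [Finset.sum_mul]
    exact Finset.sum_congr rfl fun ε _ => by ring
  rw [swap]
  simp only [key_sum, ite_mul, zero_mul]
  rw [Finset.sum_ite_eq' Finset.univ j]
  simp [hy j]

end AuxIdealNorm

/-- **Lemma 1.2.** (1) If `‖u e_i‖ = 1` for all `i` then `α(ι_{2,∞}ⁿ) ≤ α(u)`;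
(2) if `‖v* e_i‖ = 1` for all `i` then `β(ι_{1,2}ⁿ) ≤ β(v)`. -/
theorem ideal_norm_min (n : ℕ) (A : IdealNormDom n) (B : IdealNormCod n) :
    (∀ (X : Type) [NormedAddCommGroup X] [NormedSpace ℝ X] [CompleteSpace X]
      (u : l2n n →L[ℝ] X), (∀ i, ‖u (EuclideanSpace.single i 1)‖ = 1) →
        A.α (linfn n) (iota2inf n) ≤ A.α X u) ∧
    (∀ (X : Type) [NormedAddCommGroup X] [NormedSpace ℝ X] [CompleteSpace X]
      (v : X →L[ℝ] l2n n), (∀ i : Fin n, ‖(EuclideanSpace.proj i).comp v‖ = 1) →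
        B.β (l1n n) (iota12 n) ≤ B.β X v) := by
  constructor
  · -- Part (1)
    intro X _ _ _ u hu
    have hne : ∀ i, u (EuclideanSpace.single i 1) ≠ 0 := by
      intro i h0
      have := hu i
      rw [h0, norm_zero] at this
      norm_num at this
    choose f hf1 hf2 using fun i => exists_dual_vector ℝ (u (EuclideanSpace.single i 1)) (norm_ne_zero_iff.mpr (hne i))
    have hf2' : ∀ i, f i (u (EuclideanSpace.single i 1)) = 1 := by
      intro i
      have := hf2 i
      rw [hu i] at this
      simpa using this
    have hid := avg_id1 n X u f hf2'
    have hαu : 0 ≤ A.α X u := by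
      have h1 := A.ideal_lower X X (ContinuousLinearMap.id ℝ X) u (ContinuousLinearMap.id ℝ (l2n n))
      simp only [ContinuousLinearMap.comp_id, ContinuousLinearMap.id_comp] at h1
      exact le_trans (norm_nonneg _) h1
    have hzero : A.α (linfn n) 0 = 0 := by
      have h := A.smul_eq (linfn n) 0 0
      rw [zero_smul, abs_zero, zero_mul] at h
      exact h
    have hTnorm : ∀ ε : Fin n → Bool, ‖ContinuousLinearMap.pi (fun j => sgn (ε j) • f j)‖ ≤ 1 := by
      intro ε
      refine ContinuousLinearMap.opNorm_le_bound _ zero_le_one fun z => ?_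
      rw [one_mul, pi_norm_le_iff_of_nonneg (norm_nonneg z)]
      intro j
      rw [ContinuousLinearMap.pi_apply]
      calc ‖(sgn (ε j) • f j) z‖ = ‖f j z‖ := by
            rw [ContinuousLinearMap.smul_apply, norm_smul, Real.norm_eq_abs, abs_sgn, one_mul]
        _ ≤ ‖f j‖ * ‖z‖ := (f j).le_opNorm z
        _ = ‖z‖ := by rw [hf1 j, one_mul]
    have hSle : ∀ ε : Fin n → Bool, A.α (linfn n)
        ((ContinuousLinearMap.pi (fun j => sgn (ε j) • f j)).comp (u.comp (Dsign n ε)))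
        ≤ A.α X u := by
      intro ε
      have h2 := A.ideal_upper X (linfn n) (ContinuousLinearMap.pi (fun j => sgn (ε j) • f j)) u (Dsign n ε)
      have h3 := hTnorm ε
      have h4 := norm_Dsign_le n ε
      have h5 : (0:ℝ) ≤ ‖Dsign n ε‖ := norm_nonneg _
      have step1 : ‖ContinuousLinearMap.pi (fun j => sgn (ε j) • f j)‖ * A.α X u ≤ 1 * A.α X u :=
        mul_le_mul_of_nonneg_right h3 hαu
      have step2 : ‖ContinuousLinearMap.pi (fun j => sgn (ε j) • f j)‖ * A.α X u * ‖Dsign n ε‖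
          ≤ (1 * A.α X u) * 1 :=
        mul_le_mul step1 h4 h5 (by rw [one_mul]; exact hαu)
      rw [one_mul, mul_one] at step2
      linarith
    calc A.α (linfn n) (iota2inf n)
        = A.α (linfn n) ((2 ^ n : ℝ)⁻¹ • ∑ ε : Fin n → Bool,
            (ContinuousLinearMap.pi (fun j => sgn (ε j) • f j)).comp (u.comp (Dsign n ε))) := by
          rw [hid]
      _ = |(2 ^ n : ℝ)⁻¹| * A.α (linfn n) (∑ ε : Fin n → Bool,
            (ContinuousLinearMap.pi (fun j => sgn (ε j) • f j)).comp (u.comp (Dsign n ε))) :=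
          A.smul_eq _ _ _
      _ ≤ (2 ^ n : ℝ)⁻¹ * ∑ ε : Fin n → Bool, A.α (linfn n)
            ((ContinuousLinearMap.pi (fun j => sgn (ε j) • f j)).comp (u.comp (Dsign n ε))) := by
          rw [abs_of_nonneg (by positivity)]
          exact mul_le_mul_of_nonneg_left
            (Finset.le_sum_of_subadditive (A.α (linfn n)) hzero.le (A.add_le (linfn n)) _ _)
            (by positivity)
      _ ≤ (2 ^ n : ℝ)⁻¹ * ∑ _ε : Fin n → Bool, A.α X u :=
          mul_le_mul_of_nonneg_left (Finset.sum_le_sum fun ε _ => hSle ε) (by positivity)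
      _ = A.α X u := by
          rw [Finset.sum_const, Finset.card_univ]
          simp only [Fintype.card_fun, Fintype.card_bool, Fintype.card_fin, nsmul_eq_mul]
          push_cast
          rw [← mul_assoc, inv_mul_cancel₀ (by positivity : (2:ℝ)^n ≠ 0), one_mul]
  · -- Part (2)
    intro X _ _ _ v hv
    have hβv : 0 ≤ B.β X v := by
      have h1 := B.ideal_lower X X (ContinuousLinearMap.id ℝ (l2n n)) v (ContinuousLinearMap.id ℝ X)
      simp only [ContinuousLinearMap.comp_id, ContinuousLinearMap.id_comp] at h1
      exact le_trans (norm_nonneg _) h1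
    have hzero : B.β (l1n n) 0 = 0 := by
      have h := B.smul_eq (l1n n) 0 0
      have e : (0:ℝ) • (0 : l1n n →L[ℝ] l2n n) = 0 := by
        ext z
        simp
      rw [e, abs_zero, zero_mul] at h
      exact h
    have main : ∀ r : ℝ, 1 < r → B.β (l1n n) (iota12 n) ≤ r * B.β X v := by
      intro r hr
      have hr0 : (0:ℝ) < r := lt_trans one_pos hr
      have h1r : ∀ i : Fin n, ∃ x : X, ‖x‖ < 1 ∧ 1/r < ‖((EuclideanSpace.proj i).comp v) x‖ := by
        intro i
        refine ContinuousLinearMap.exists_lt_apply_of_lt_opNorm _ ?_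
        rw [hv i, div_lt_one hr0]
        exact hr
      choose x hx1 hx2 using h1r
      have hcabs : ∀ i, 1/r < |v (x i) i| := by
        intro i
        have := hx2 i
        simpa [EuclideanSpace.proj, Real.norm_eq_abs] using this
      have hcne : ∀ i, v (x i) i ≠ 0 := by
        intro i h0
        have := hcabs i
        rw [h0, abs_zero] at this
        have hp : (0:ℝ) < 1/r := by positivity
        linarith
      set y : Fin n → X := fun i => (v (x i) i)⁻¹ • x i with hy
      have hyv : ∀ i, v (y i) i = 1 := by
        intro i
        rw [hy]
        simp only [_root_.map_smul, PiLp.smul_apply, smul_eq_mul]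
        exact inv_mul_cancel₀ (hcne i)
      have hynorm : ∀ i, ‖y i‖ ≤ r := by
        intro i
        rw [hy]
        simp only [norm_smul, Real.norm_eq_abs, abs_inv]
        have h1 : |v (x i) i|⁻¹ < r := by
          rw [inv_lt_comm₀ (lt_trans (by positivity) (hcabs i)) hr0]
          rw [inv_eq_one_div]
          exact hcabs i
        calc |v (x i) i|⁻¹ * ‖x i‖ ≤ |v (x i) i|⁻¹ * 1 :=
              mul_le_mul_of_nonneg_left (le_of_lt (hx1 i)) (by positivity)
          _ ≤ r := by rw [mul_one]; exact le_of_lt h1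
      have hid := avg_id2 n X v y hyv
      have hT : ∀ ε : Fin n → Bool, ‖Tl1 n X (fun i => sgn (ε i) • y i)‖ ≤ r := by
        intro ε
        refine norm_Tl1_le n X _ r (le_of_lt hr0) fun i => ?_
        rw [norm_smul, Real.norm_eq_abs, abs_sgn, one_mul]
        exact hynorm i
      have hSle : ∀ ε : Fin n → Bool, B.β (l1n n)
          ((Dsign n ε).comp (v.comp (Tl1 n X (fun i => sgn (ε i) • y i))))
          ≤ r * B.β X v := by
        intro ε
        have h2 := B.ideal_upper (l1n n) X (Dsign n ε) v (Tl1 n X (fun i => sgn (ε i) • y i))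
        have h3 := hT ε
        have h4 := norm_Dsign_le n ε
        have h5 : (0:ℝ) ≤ ‖Tl1 n X (fun i => sgn (ε i) • y i)‖ := norm_nonneg _
        have hrb : 0 ≤ r * B.β X v := mul_nonneg (le_of_lt (lt_trans one_pos hr)) hβv
        have step1 : ‖Dsign n ε‖ * B.β X v ≤ 1 * B.β X v :=
          mul_le_mul_of_nonneg_right h4 hβv
        have step2 : ‖Dsign n ε‖ * B.β X v * ‖Tl1 n X (fun i => sgn (ε i) • y i)‖
            ≤ (1 * B.β X v) * r :=
          mul_le_mul step1 h3 h5 (by rw [one_mul]; exact hβv)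
        rw [one_mul] at step2
        rw [mul_comm (B.β X v) r] at step2
        linarith
      calc B.β (l1n n) (iota12 n)
          = B.β (l1n n) ((2 ^ n : ℝ)⁻¹ • ∑ ε : Fin n → Bool,
              (Dsign n ε).comp (v.comp (Tl1 n X (fun i => sgn (ε i) • y i)))) := by
            rw [hid]
        _ = |(2 ^ n : ℝ)⁻¹| * B.β (l1n n) (∑ ε : Fin n → Bool,
              (Dsign n ε).comp (v.comp (Tl1 n X (fun i => sgn (ε i) • y i)))) :=
            B.smul_eq _ _ _
        _ ≤ (2 ^ n : ℝ)⁻¹ * ∑ ε : Fin n → Bool, B.β (l1n n)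
              ((Dsign n ε).comp (v.comp (Tl1 n X (fun i => sgn (ε i) • y i)))) := by
            rw [abs_of_nonneg (by positivity)]
            exact mul_le_mul_of_nonneg_left
              (Finset.le_sum_of_subadditive (B.β (l1n n)) hzero.le (B.add_le (l1n n)) _ _)
              (by positivity)
        _ ≤ (2 ^ n : ℝ)⁻¹ * ∑ _ε : Fin n → Bool, (r * B.β X v) :=
            mul_le_mul_of_nonneg_left (Finset.sum_le_sum fun ε _ => hSle ε) (by positivity)
        _ = r * B.β X v := by
            rw [Finset.sum_const, Finset.card_univ]
            simp only [Fintype.card_fun, Fintype.card_bool, Fintype.card_fin, nsmul_eq_mul]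
            push_cast
            rw [← mul_assoc, inv_mul_cancel₀ (by positivity : (2:ℝ)^n ≠ 0), one_mul]
    by_contra hcon
    push_neg at hcon
    rcases eq_or_lt_of_le hβv with h0 | hpos
    · have h2 := main 2 one_lt_two
      rw [← h0] at h2 hcon
      rw [mul_zero] at h2
      linarith
    · set a := B.β (l1n n) (iota12 n) with ha
      set b := B.β X v with hb
      have hr1 : 1 < (a + b) / (2 * b) := by
        rw [lt_div_iff₀ (by linarith)]
        linarith
      have h2 := main ((a + b) / (2 * b)) hr1
      have h3 : (a + b) / (2 * b) * b = (a + b) / 2 := by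
        field_simp
      rw [h3] at h2
      linarith


end
end

section
/- Let 1 ≤ n ≤ N and let H ⊂ ℓ₂^N be an n-dimensional subspace. Then there exist an orthonormal basis (h_k)_{k=1}^n of H and pairwise distinct coordinates j_k ∈ {1,…,N} such that |(h_k, e_{j_k})|² ≥ n/(3N) for all k ≤ n/3. -/
noncomputable section

open Module Submodule Finset

namespace SOBLC

variable {N : ℕ}

abbrev E (N : ℕ) := EuclideanSpace ℝ (Fin N)


lemma inner_e (x : E N) (j : Fin N) :
    (inner ℝ x (EuclideanSpace.single j (1:ℝ)) : ℝ) = x j := by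
  rw [EuclideanSpace.inner_single_right]; simp

lemma norm_sq_sum (x : E N) : ‖x‖^2 = ∑ j, (x j)^2 := by
  rw [EuclideanSpace.norm_eq, Real.sq_sqrt (by positivity)]
  simp [sq_abs]

lemma norm_sq_repr {K : Submodule ℝ (E N)} [FiniteDimensional ℝ K] (y : K) :
    ‖y‖^2 = ∑ i, ((inner ℝ ((stdOrthonormalBasis ℝ K) i) y : ℝ))^2 := by
  set b := stdOrthonormalBasis ℝ K
  rw [← b.repr.norm_map y, norm_sq_sum]
  refine Finset.sum_congr rfl fun i _ => ?_
  rw [b.repr_apply_apply]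

lemma sum_proj_sq (K : Submodule ℝ (E N)) :
    ∑ j : Fin N,
      ‖((orthogonalProjection K (EuclideanSpace.single j (1:ℝ))) : E N)‖^2
      = (finrank ℝ K : ℝ) := by
  set b := stdOrthonormalBasis ℝ K
  have h1 : ∀ j : Fin N,
      ‖((orthogonalProjection K (EuclideanSpace.single j (1:ℝ))) : E N)‖^2
        = ∑ i, (((b i : E N)) j)^2 := by
    intro j
    rw [show ‖((orthogonalProjection K (EuclideanSpace.single j (1:ℝ))) : E N)‖
        = ‖orthogonalProjection K (EuclideanSpace.single j (1:ℝ))‖ from rfl,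
      norm_sq_repr]
    refine Finset.sum_congr rfl fun i _ => ?_
    rw [inner_orthogonalProjection_eq_of_mem_left]
    congr 1
    rw [inner_e]
  simp_rw [h1]
  rw [Finset.sum_comm]
  have h2 : ∀ i, ∑ j : Fin N, ((b i : E N) j)^2 = 1 := by
    intro i
    rw [← norm_sq_sum]
    have : ‖(b i : E N)‖ = 1 := b.orthonormal.1 i
    rw [this]; norm_num
  simp_rw [h2]
  simp

lemma inner_proj_self (K : Submodule ℝ (E N)) [FiniteDimensional ℝ K] (x : E N) :
    (inner ℝ ((orthogonalProjection K x : E N)) x : ℝ)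
      = ‖(orthogonalProjection K x : E N)‖^2 := by
  set y : E N := (orthogonalProjection K x : E N)
  have h0 : (inner ℝ (x - y) y : ℝ) = 0 :=
    Submodule.starProjection_inner_eq_zero (K := K) x _ (orthogonalProjection K x).2
  have : (inner ℝ y x : ℝ) = inner ℝ y y + inner ℝ y (x - y) := by
    rw [← inner_add_right, add_sub_cancel]
  have h0' : (inner ℝ y (x - y) : ℝ) = 0 := by rw [real_inner_comm]; exact h0
  rw [this, h0', add_zero, real_inner_self_eq_norm_sq]

lemma norm_proj_le (K : Submodule ℝ (E N)) [FiniteDimensional ℝ K] (x : E N) :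
    ‖(orthogonalProjection K x : E N)‖ ≤ ‖x‖ := by
  have h := inner_proj_self K x
  have h2 := real_inner_le_norm ((orthogonalProjection K x : E N)) x
  rcases eq_or_lt_of_le (norm_nonneg ((orthogonalProjection K x : E N))) with h3 | h3
  · rw [← h3]; exact norm_nonneg x
  · nlinarith [h2, h]

lemma finrank_compl {m n : ℕ} (H : Submodule ℝ (E N)) (hH : finrank ℝ H = n)
    (h : Fin m → E N) (horth : Orthonormal ℝ h) (hmem : ∀ k, h k ∈ H) :
    m + finrank ℝ (((span ℝ (Set.range h))ᗮ ⊓ H : Submodule ℝ (E N)) : Submodule ℝ (E N)) = n := by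
  set S : Submodule ℝ (E N) := span ℝ (Set.range h) with hS
  have hSH : S ≤ H := span_le.2 (Set.range_subset_iff.2 hmem)
  have hfs : finrank ℝ S = m := by
    rw [hS, finrank_span_eq_card horth.linearIndependent, Fintype.card_fin]
  have hsup : S ⊔ (Sᗮ ⊓ H) = H := by
    apply le_antisymm (sup_le hSH inf_le_right)
    intro x hx
    have h1 : (orthogonalProjection S x : E N) ∈ S := (orthogonalProjection S x).2
    have h2 : x - orthogonalProjection S x ∈ Sᗮ ⊓ H :=
      ⟨Submodule.sub_starProjection_mem_orthogonal (K := S) x, Submodule.sub_mem H hx (hSH h1)⟩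
    have := Submodule.add_mem (S ⊔ (Sᗮ ⊓ H)) (Submodule.mem_sup_left h1)
      (Submodule.mem_sup_right h2)
    simpa using this
  have hinf : S ⊓ (Sᗮ ⊓ H) = ⊥ := by
    apply le_antisymm _ bot_le
    refine le_trans (inf_le_inf_left S inf_le_left) ?_
    rw [S.inf_orthogonal_eq_bot]
  have := Submodule.finrank_sup_add_finrank_inf_eq S (Sᗮ ⊓ H)
  rw [hsup, hinf, hfs, hH, finrank_bot, add_zero] at this
  omega

lemma exists_ext {n m : ℕ} (hn : 1 ≤ n) (hnN : n ≤ N) (hm : m < n)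
    (H : Submodule ℝ (E N)) (hH : finrank ℝ H = n)
    (h : Fin m → E N) (j : Fin m → Fin N)
    (horth : Orthonormal ℝ h) (hmem : ∀ k, h k ∈ H) (hinj : Function.Injective j) :
    ∃ (v : E N) (j' : Fin N), ‖v‖ = 1 ∧ v ∈ H ∧ (∀ k, (inner ℝ (h k) v : ℝ) = 0) ∧
      (∀ k, j k ≠ j') ∧
      (((m:ℝ) + 1 ≤ (n:ℝ)/3 →
        (n:ℝ)/(3*(N:ℝ)) ≤ (inner ℝ v (EuclideanSpace.single j' (1:ℝ)) : ℝ)^2)) := by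
  set S : Submodule ℝ (E N) := span ℝ (Set.range h) with hS
  set K : Submodule ℝ (E N) := Sᗮ ⊓ H with hK
  have hdim : m + finrank ℝ K = n := finrank_compl H hH h horth hmem
  have hKH : K ≤ H := inf_le_right
  have hKS : K ≤ Sᗮ := inf_le_left
  -- the candidate coordinate
  set T : Finset (Fin N) := Finset.univ \ Finset.image j Finset.univ with hT
  have hcardim : (Finset.image j Finset.univ).card = m := by
    rw [Finset.card_image_of_injective _ hinj, Finset.card_univ, Fintype.card_fin]
  have hcardT : T.card = N - m := by
    rw [hT, Finset.card_sdiff_of_subset (Finset.subset_univ _), Finset.card_univ, Fintype.card_fin, hcardim]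
  have hTne : T.Nonempty := by
    rw [← Finset.card_pos, hcardT]; omega
  set f : Fin N → ℝ := fun t =>
    ‖((orthogonalProjection K (EuclideanSpace.single t (1:ℝ))) : E N)‖^2 with hf
  obtain ⟨j', hj'T, hmax⟩ := T.exists_max_image f hTne
  have hf0 : ∀ t, 0 ≤ f t := fun t => sq_nonneg _
  have hf1 : ∀ t, f t ≤ 1 := by
    intro t
    have := norm_proj_le K (EuclideanSpace.single t (1:ℝ))
    rw [EuclideanSpace.norm_single, norm_one] at this
    simp only [hf]
    nlinarith [norm_nonneg ((orthogonalProjection K (EuclideanSpace.single t (1:ℝ))) : E N)]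
  -- key bound
  have key : ((m:ℝ) + 1 ≤ (n:ℝ)/3) → (n:ℝ)/(3*(N:ℝ)) ≤ f j' := by
    intro hm3
    have hsumall : ∑ t : Fin N, f t = ((n:ℝ) - m) := by
      rw [hf, sum_proj_sq]
      have : (finrank ℝ K : ℝ) = (n:ℝ) - m := by
        have := hdim; push_cast [← this]; ring
      rw [this]
    have hsplit : ∑ t : Fin N, f t = ∑ t ∈ T, f t + ∑ t ∈ Finset.image j Finset.univ, f t := by
      rw [hT, Finset.sum_sdiff (Finset.subset_univ _)]
    have him : ∑ t ∈ Finset.image j Finset.univ, f t ≤ (m:ℝ) := by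
      calc ∑ t ∈ Finset.image j Finset.univ, f t
          ≤ ∑ _t ∈ Finset.image j Finset.univ, (1:ℝ) :=
            Finset.sum_le_sum fun t _ => hf1 t
        _ = (m:ℝ) := by rw [Finset.sum_const, hcardim]; simp
    have hTsum : (n:ℝ) - 2*m ≤ ∑ t ∈ T, f t := by
      have := hsplit ▸ hsumall; linarith
    have hTmax : ∑ t ∈ T, f t ≤ (N:ℝ) * f j' := by
      calc ∑ t ∈ T, f t ≤ ∑ _t ∈ T, f j' := Finset.sum_le_sum fun t ht => hmax t ht
        _ = T.card * f j' := by rw [Finset.sum_const]; simp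
        _ ≤ (N:ℝ) * f j' := by
            apply mul_le_mul_of_nonneg_right _ (hf0 j')
            have : T.card ≤ N := by rw [hcardT]; omega
            exact_mod_cast this
    have hN0 : (0:ℝ) < N := by
      have : 0 < N := by omega
      exact_mod_cast this
    rw [div_le_iff₀ (by positivity)]
    nlinarith
  have hjne : ∀ k, j k ≠ j' := by
    intro k hk
    rw [hT, Finset.mem_sdiff] at hj'T
    exact hj'T.2 (Finset.mem_image.2 ⟨k, Finset.mem_univ k, hk⟩)
  have horthS : ∀ (x : E N), x ∈ K → ∀ k, (inner ℝ (h k) x : ℝ) = 0 := by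
    intro x hx k
    exact (Submodule.mem_orthogonal S x).1 (hKS hx) (h k) (subset_span (Set.mem_range_self k))
  by_cases hQ : ((orthogonalProjection K (EuclideanSpace.single j' (1:ℝ))) : E N) = 0
  · -- degenerate case: pick any unit vector in K
    have hfr : 0 < finrank ℝ K := by omega
    set b := stdOrthonormalBasis ℝ K
    set i0 : Fin (finrank ℝ K) := ⟨0, hfr⟩
    refine ⟨(b i0 : E N), j', ?_, hKH (b i0).2, fun k => horthS _ (b i0).2 k, hjne, ?_⟩
    · exact b.orthonormal.1 i0
    · intro hm3
      exfalso
      have hb := key hm3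
      rw [hf] at hb
      simp only [hQ, norm_zero] at hb
      have hN0 : (0:ℝ) < N := by
        have : 0 < N := by omega
        exact_mod_cast this
      have hn0 : (0:ℝ) < n := by
        have : 0 < n := hn
        exact_mod_cast this
      have : (0:ℝ) < (n:ℝ)/(3*(N:ℝ)) := by positivity
      nlinarith
  · set Qe : E N := ((orthogonalProjection K (EuclideanSpace.single j' (1:ℝ))) : E N) with hQe
    set r : ℝ := ‖Qe‖ with hr
    have hr0 : r ≠ 0 := norm_ne_zero_iff.2 hQ
    have hQK : Qe ∈ K := (orthogonalProjection K (EuclideanSpace.single j' (1:ℝ))).2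
    refine ⟨r⁻¹ • Qe, j', ?_, H.smul_mem _ (hKH hQK), ?_, hjne, ?_⟩
    · rw [norm_smul, norm_inv, norm_norm, ← hr, inv_mul_cancel₀ hr0]
    · intro k
      rw [real_inner_smul_right, horthS Qe hQK k, mul_zero]
    · intro hm3
      have hb := key hm3
      have hip : (inner ℝ Qe (EuclideanSpace.single j' (1:ℝ)) : ℝ) = r^2 :=
        inner_proj_self K (EuclideanSpace.single j' (1:ℝ))
      rw [real_inner_smul_left, hip]
      have : (r⁻¹ * r^2)^2 = r^2 := by
        field_simp
      rw [this]
      exact hb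
lemma orth_snoc {m : ℕ} {h : Fin m → E N} (horth : Orthonormal ℝ h) {v : E N}
    (hv : ‖v‖ = 1) (hov : ∀ k, (inner ℝ (h k) v : ℝ) = 0) :
    Orthonormal ℝ (Fin.snoc h v : Fin (m+1) → E N) := by
  rw [orthonormal_iff_ite] at horth ⊢
  intro i j
  refine Fin.lastCases ?_ ?_ i <;> [skip; (intro i')] <;>
    refine Fin.lastCases ?_ ?_ j <;> try intro j'
  · simp only [Fin.snoc_last, if_pos rfl]
    rw [real_inner_self_eq_norm_sq, hv]; norm_num
  · simp only [Fin.snoc_last, Fin.snoc_castSucc]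
    rw [if_neg (Fin.castSucc_lt_last j').ne', real_inner_comm, hov]
  · simp only [Fin.snoc_last, Fin.snoc_castSucc]
    rw [if_neg (Fin.castSucc_lt_last i').ne, hov]
  · simp only [Fin.snoc_castSucc]
    rw [horth i' j']
    simp [Fin.castSucc_inj]

lemma step (n : ℕ) (hn : 1 ≤ n) (hnN : n ≤ N)
    (H : Submodule ℝ (E N)) (hH : finrank ℝ H = n) :
    ∀ m, m ≤ n → ∃ (h : Fin m → E N) (j : Fin m → Fin N),
      Orthonormal ℝ h ∧ (∀ k, h k ∈ H) ∧ Function.Injective j ∧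
      ∀ k : Fin m, ((k : ℕ) : ℝ) + 1 ≤ (n : ℝ) / 3 →
        (n : ℝ) / (3 * (N : ℝ))
          ≤ (inner ℝ (h k) (EuclideanSpace.single (j k) (1 : ℝ)) : ℝ) ^ 2 := by
  intro m
  induction m with
  | zero =>
    intro _
    refine ⟨Fin.elim0, Fin.elim0, ?_, fun k => k.elim0, fun k => k.elim0, fun k => k.elim0⟩
    rw [orthonormal_iff_ite]; exact fun i => i.elim0
  | succ m ih =>
    intro hm1
    obtain ⟨h, j, horth, hmem, hinj, hprop⟩ := ih (by omega)
    obtain ⟨v, j', hv1, hvH, hvorth, hjne, hbound⟩ :=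
      exists_ext hn hnN (by omega) H hH h j horth hmem hinj
    refine ⟨Fin.snoc h v, Fin.snoc j j', orth_snoc horth hv1 hvorth, ?_, ?_, ?_⟩
    · intro k
      refine Fin.lastCases ?_ ?_ k
      · rw [Fin.snoc_last]; exact hvH
      · intro k'; rw [Fin.snoc_castSucc]; exact hmem k'
    · intro a b hab
      rcases Fin.eq_castSucc_or_eq_last a with ⟨a', rfl⟩ | rfl <;>
        rcases Fin.eq_castSucc_or_eq_last b with ⟨b', rfl⟩ | rfl
      · rw [Fin.snoc_castSucc, Fin.snoc_castSucc] at hab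
        rw [hinj hab]
      · rw [Fin.snoc_last, Fin.snoc_castSucc] at hab
        exact absurd hab (hjne a')
      · rw [Fin.snoc_last, Fin.snoc_castSucc] at hab
        exact absurd hab.symm (hjne b')
      · rfl
    · intro k
      refine Fin.lastCases ?_ ?_ k
      · intro hk
        rw [Fin.snoc_last, Fin.snoc_last]
        apply hbound
        simpa using hk
      · intro k' hk'
        rw [Fin.snoc_castSucc, Fin.snoc_castSucc]
        apply hprop k'
        simpa using hk'

end SOBLC

/-- **Lemma 3.1.** Every `n`-dimensional subspace `H` of `ℓ₂^N` has an orthonormal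
basis `(h_k)` together with pairwise distinct coordinates `j_k` such that
`|(h_k, e_{j_k})|² ≥ n/(3N)` for all `k ≤ n/3`. -/
theorem subspace_orthonormal_basis_large_coordinates
    (n N : ℕ) (hn : 1 ≤ n) (hnN : n ≤ N)
    (H : Submodule ℝ (EuclideanSpace ℝ (Fin N)))
    (hH : Module.finrank ℝ H = n) :
    ∃ (h : Fin n → EuclideanSpace ℝ (Fin N)) (j : Fin n → Fin N),
      Orthonormal ℝ h ∧ (∀ k, h k ∈ H) ∧
      Submodule.span ℝ (Set.range h) = H ∧
      Function.Injective j ∧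
      ∀ k : Fin n, ((k : ℕ) : ℝ) + 1 ≤ (n : ℝ) / 3 →
        (n : ℝ) / (3 * (N : ℝ))
          ≤ (inner ℝ (h k) (EuclideanSpace.single (j k) (1 : ℝ)) : ℝ) ^ 2 := by
  obtain ⟨h, j, horth, hmem, hinj, hprop⟩ := SOBLC.step n hn hnN H hH n le_rfl
  refine ⟨h, j, horth, hmem, ?_, hinj, hprop⟩
  have hle : Submodule.span ℝ (Set.range h) ≤ H :=
    Submodule.span_le.2 (Set.range_subset_iff.2 hmem)
  apply Submodule.eq_of_le_of_finrank_eq hle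
  rw [finrank_span_eq_card horth.linearIndependent, Fintype.card_fin, hH]

end
end
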